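/- Let G be a graph (2-uniform hypergraph) with signless Laplacian matrix Q = D + A and clique number ω. Then the largest eigenvalue q(G) of Q satisfies q(G) ≥ 2(ω - 1). -/

import Mathlib

open Matrix

lemma rayleigh_le (n : ℕ) (M : Matrix (Fin n) (Fin n) ℝ) (hn : 0 < n)
    (hM : M.IsHermitian) (x : Fin n → ℝ) :
    x ⬝ᵥ (M *ᵥ x) ≤ (⨆ i, hM.eigenvalues i) * (x ⬝ᵥ x) := by
  have : Nonempty (Fin n) := ⟨⟨0, hn⟩⟩
  set U : Matrix (Fin n) (Fin n) ℝ := (hM.eigenvectorUnitary : Matrix (Fin n) (Fin n) ℝ) with hU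
  set y : Fin n → ℝ := x ᵥ* U with hy
  have hUU : U * star U = 1 := (Matrix.mem_unitaryGroup_iff).mp hM.eigenvectorUnitary.2
  have hyy : y ⬝ᵥ (star U *ᵥ x) = x ⬝ᵥ x := by
    rw [hy, ← Matrix.dotProduct_mulVec, Matrix.mulVec_mulVec, hUU, Matrix.one_mulVec]
  have hstar : star U *ᵥ x = y := by
    rw [Matrix.star_eq_conjTranspose, Matrix.conjTranspose_eq_transpose_of_trivial,
      Matrix.mulVec_transpose, hy]
  have hnorm : y ⬝ᵥ y = x ⬝ᵥ x := by rw [← hstar] at hyy ⊢; exact hyy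
  have hquad : x ⬝ᵥ (M *ᵥ x) = ∑ i, hM.eigenvalues i * (y i * y i) := by
    conv_lhs => rw [hM.spectral_theorem, Unitary.conjStarAlgAut_apply]
    rw [Matrix.dotProduct_mulVec, ← Matrix.vecMul_vecMul, ← Matrix.vecMul_vecMul,
      ← Matrix.dotProduct_mulVec, hstar]
    simp only [Matrix.vecMul_diagonal, dotProduct, Function.comp]
    apply Finset.sum_congr rfl
    intro i _
    simp [hy]
    ring
  rw [hquad]
  have hle : ∀ i, hM.eigenvalues i ≤ ⨆ j, hM.eigenvalues j := fun i =>
    le_ciSup (Set.Finite.bddAbove (Set.finite_range _)) i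
  calc ∑ i, hM.eigenvalues i * (y i * y i)
      ≤ ∑ i, (⨆ j, hM.eigenvalues j) * (y i * y i) := by
        apply Finset.sum_le_sum
        intro i _
        exact mul_le_mul_of_nonneg_right (hle i) (mul_self_nonneg _)
    _ = (⨆ j, hM.eigenvalues j) * (y ⬝ᵥ y) := by rw [dotProduct, Finset.mul_sum]
    _ = (⨆ j, hM.eigenvalues j) * (x ⬝ᵥ x) := by rw [hnorm]

theorem stmt_14 (n : ℕ) (G : SimpleGraph (Fin n)) [DecidableRel G.Adj]
    (hQ : (G.degMatrix ℝ + G.adjMatrix ℝ).IsHermitian) :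
    (⨆ i, hQ.eigenvalues i) ≥ 2 * ((G.cliqueNum : ℝ) - 1) := by
  rcases Nat.eq_zero_or_pos n with hn | hn
  · subst hn
    have : IsEmpty (Fin 0) := inferInstance
    have hc : G.cliqueNum = 0 := by
      unfold SimpleGraph.cliqueNum
      rw [show {n | ∃ s, G.IsNClique n s} = ({0} : Set ℕ) from ?_, csSup_singleton]
      ext k
      simp only [Set.mem_setOf_eq, Set.mem_singleton_iff]
      constructor
      · rintro ⟨s, hs⟩
        have : s = ∅ := Finset.eq_empty_of_isEmpty s
        rw [this] at hs
        simpa using hs.card_eq.symm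
      · rintro rfl
        exact ⟨∅, by simp [SimpleGraph.isNClique_empty]⟩
    rw [hc, iSup, Set.range_eq_empty, Real.sSup_empty]
    norm_num
  · obtain ⟨s, hs⟩ := G.exists_isNClique_cliqueNum
    set ω := G.cliqueNum with hω
    have hω1 : 1 ≤ ω := by
      have : G.IsClique ({⟨0, hn⟩} : Finset (Fin n)) := by simp
      have := this.card_le_cliqueNum
      simpa using this
    set x : Fin n → ℝ := fun i => if i ∈ s then 1 else 0 with hx
    have hxx : x ⬝ᵥ x = ω := by
      simp only [dotProduct, hx, ite_mul, one_mul, zero_mul, Finset.sum_ite_mem,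
        Finset.univ_inter, mul_ite, mul_one, mul_zero]
      rw [Finset.inter_self, Finset.sum_const, hs.card_eq]
      simp
    -- erase subset neighbors
    have herase : ∀ i ∈ s, s.erase i ⊆ G.neighborFinset i := by
      intro i hi j hj
      rw [SimpleGraph.mem_neighborFinset]
      exact (hs.isClique (Finset.mem_of_mem_erase hj) hi (Finset.ne_of_mem_erase hj)).symm
    have hdeg : ∀ i ∈ s, (ω : ℝ) - 1 ≤ G.degree i := by
      intro i hi
      have := Finset.card_le_card (herase i hi)
      rw [Finset.card_erase_of_mem hi, hs.card_eq] at this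
      rw [SimpleGraph.card_neighborFinset_eq_degree] at this
      have : (ω - 1 : ℕ) ≤ G.degree i := this
      calc (ω : ℝ) - 1 = ((ω - 1 : ℕ) : ℝ) := by
            rw [Nat.cast_sub hω1, Nat.cast_one]
        _ ≤ G.degree i := by exact_mod_cast this
    have hD : (∑ i ∈ s, ((ω : ℝ) - 1)) ≤ x ⬝ᵥ (G.degMatrix ℝ *ᵥ x) := by
      rw [G.dotProduct_mulVec_degMatrix]
      rw [show (∑ i : Fin n, (G.degree i : ℝ) * x i * x i)
          = ∑ i ∈ s, (G.degree i : ℝ) from ?_]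
      · exact Finset.sum_le_sum hdeg
      · rw [← Finset.sum_subset (Finset.subset_univ s)]
        · apply Finset.sum_congr rfl; intro i hi; simp [hx, hi]
        · intro i _ hi; simp [hx, hi]
    have hA : x ⬝ᵥ (G.adjMatrix ℝ *ᵥ x) = ∑ i ∈ s, ((ω : ℝ) - 1) := by
      have hstep : ∀ i : Fin n, x i * (G.adjMatrix ℝ *ᵥ x) i
          = if i ∈ s then ((s.erase i).card : ℝ) else 0 := by
        intro i
        rw [SimpleGraph.adjMatrix_mulVec_apply]
        by_cases hi : i ∈ s
        · simp only [hx, hi, if_true, one_mul]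
          rw [show (∑ u ∈ G.neighborFinset i, if u ∈ s then (1:ℝ) else 0)
              = ∑ u ∈ G.neighborFinset i ∩ s, (1:ℝ) from by
            rw [Finset.sum_ite_mem]]
          rw [show G.neighborFinset i ∩ s = s.erase i from ?_]
          · simp
          · apply Finset.Subset.antisymm
            · intro j hj
              rw [Finset.mem_inter, SimpleGraph.mem_neighborFinset] at hj
              exact Finset.mem_erase.mpr ⟨fun h => G.loopless.irrefl i (h ▸ hj.1), hj.2⟩
            · intro j hj
              exact Finset.mem_inter.mpr ⟨herase i hi hj, Finset.mem_of_mem_erase hj⟩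
        · simp [hx, hi]
      rw [dotProduct]
      simp_rw [hstep]
      rw [Finset.sum_ite_mem, Finset.univ_inter]
      apply Finset.sum_congr rfl
      intro i hi
      rw [Finset.card_erase_of_mem hi, hs.card_eq, Nat.cast_sub hω1, Nat.cast_one]
    have hray := rayleigh_le n _ hn hQ x
    rw [Matrix.add_mulVec, dotProduct_add] at hray
    have hsum : (∑ i ∈ s, ((ω : ℝ) - 1)) = ω * (ω - 1) := by
      rw [Finset.sum_const, hs.card_eq]; simp [mul_comm]
    have hlow : 2 * (ω : ℝ) * ((ω : ℝ) - 1) ≤ (⨆ i, hQ.eigenvalues i) * ω := by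
      calc 2 * (ω : ℝ) * ((ω : ℝ) - 1) = ω * (ω - 1) + ω * (ω - 1) := by ring
        _ ≤ x ⬝ᵥ (G.degMatrix ℝ *ᵥ x) + x ⬝ᵥ (G.adjMatrix ℝ *ᵥ x) := by
            rw [hA, hsum]; exact add_le_add_left (hsum ▸ hD) _
        _ ≤ (⨆ i, hQ.eigenvalues i) * (x ⬝ᵥ x) := hray
        _ = (⨆ i, hQ.eigenvalues i) * ω := by rw [hxx]
    have hωpos : (0 : ℝ) < ω := by exact_mod_cast hω1
    rw [ge_iff_le]
    have : (2 * ((ω : ℝ) - 1)) * ω ≤ (⨆ i, hQ.eigenvalues i) * ω := by linarith [hlow]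
    exact le_of_mul_le_mul_right this hωpos
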